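/- Let (X,‖·‖) be a normed vector space with modulus of convexity δ and characteristic of convexity ε₀ < 2. Then for all ε∈(ε₀,2], δ(2(1−δ(ε))) ≤ 1 − ε/2. -/
import Mathlib


open Metric Set

/-- The modulus of convexity of a normed space. -/
noncomputable def modConv (X : Type*) [NormedAddCommGroup X] (ε : ℝ) : ℝ :=
  sInf {t : ℝ | ∃ x y : X, ‖x‖ ≤ 1 ∧ ‖y‖ ≤ 1 ∧ ε ≤ ‖x - y‖ ∧ t = 1 - ‖x + y‖ / 2}

/-- The characteristic of convexity of a normed space. -/
noncomputable def charConv (X : Type*) [NormedAddCommGroup X] : ℝ :=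
  sSup {ε : ℝ | ε ∈ Set.Icc 0 2 ∧ modConv X ε = 0}

section Aux

variable {X : Type*} [NormedAddCommGroup X]

lemma modConv_set_bddBelow (ε : ℝ) :
    BddBelow {t : ℝ | ∃ x y : X, ‖x‖ ≤ 1 ∧ ‖y‖ ≤ 1 ∧ ε ≤ ‖x - y‖ ∧ t = 1 - ‖x + y‖ / 2} := by
  refine ⟨0, fun t ht => ?_⟩
  obtain ⟨x, y, hx, hy, -, rfl⟩ := ht
  have : ‖x + y‖ ≤ 2 := (norm_add_le x y).trans (by linarith)
  linarith

lemma modConv_le {ε : ℝ} {x y : X} (hx : ‖x‖ ≤ 1) (hy : ‖y‖ ≤ 1) (hxy : ε ≤ ‖x - y‖) :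
    modConv X ε ≤ 1 - ‖x + y‖ / 2 :=
  csInf_le (modConv_set_bddBelow ε) ⟨x, y, hx, hy, hxy, rfl⟩

lemma modConv_nonneg (ε : ℝ) : 0 ≤ modConv X ε := by
  apply Real.sInf_nonneg
  rintro t ⟨x, y, hx, hy, -, rfl⟩
  have : ‖x + y‖ ≤ 2 := (norm_add_le x y).trans (by linarith)
  linarith

variable [NormedSpace ℝ X] [Nontrivial X]

lemma modConv_zero : modConv X 0 = 0 := by
  obtain ⟨e, he⟩ := exists_norm_eq X (zero_le_one)
  refine le_antisymm ?_ (modConv_nonneg 0)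
  have h1 : modConv X 0 ≤ 1 - ‖e + e‖ / 2 :=
    modConv_le he.le he.le (by positivity)
  have : ‖e + e‖ = 2 := by
    have : e + e = (2 : ℝ) • e := by module
    rw [this, norm_smul, he]; norm_num
  rw [this] at h1; linarith

lemma charConv_nonneg : 0 ≤ charConv X := by
  apply le_csSup
  · exact ⟨2, fun z hz => hz.1.2⟩
  · exact ⟨⟨le_refl 0, by norm_num⟩, modConv_zero⟩

lemma modConv_pos {ε : ℝ} (hε₀ : charConv X < ε) (hε2 : ε ≤ 2) : 0 < modConv X ε := by
  rcases (modConv_nonneg (X := X) ε).lt_or_eq with h | h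
  · exact h
  · exfalso
    have hmem : ε ∈ {ε : ℝ | ε ∈ Set.Icc 0 2 ∧ modConv X ε = 0} :=
      ⟨⟨(charConv_nonneg (X := X)).trans hε₀.le, hε2⟩, h.symm⟩
    have : ε ≤ charConv X := le_csSup ⟨2, fun z hz => hz.1.2⟩ hmem
    exact absurd hε₀ (not_lt.mpr this)

lemma modConv_le_one {ε : ℝ} (hε2 : ε ≤ 2) : modConv X ε ≤ 1 := by
  obtain ⟨e, he⟩ := exists_norm_eq X (zero_le_one)
  have h1 : modConv X ε ≤ 1 - ‖e + -e‖ / 2 := by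
    apply modConv_le he.le (by rw [norm_neg, he])
    have : e - -e = (2 : ℝ) • e := by module
    rw [this, norm_smul, he]
    norm_num
    exact hε2
  simpa using h1

end Aux

/-- Goebel–Kirk: if the characteristic of convexity `ε₀` of a normed space is `< 2`, then
`δ(2(1-δ(ε))) ≤ 1 - ε/2` for all `ε ∈ (ε₀, 2]`. -/
theorem modConv_self_estimate {X : Type*} [NormedAddCommGroup X] [NormedSpace ℝ X]
    [Nontrivial X] (h : charConv X < 2) :
    ∀ ε ∈ Set.Ioc (charConv X) 2,
      modConv X (2 * (1 - modConv X ε)) ≤ 1 - ε / 2 := by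
  rintro ε ⟨hε₀, hε2⟩
  set δ : ℝ := modConv X ε with hδdef
  have hδpos : 0 < δ := modConv_pos hε₀ hε2
  have hδle1 : δ ≤ 1 := modConv_le_one hε2
  have hεpos : 0 < ε := lt_of_le_of_lt (charConv_nonneg (X := X)) hε₀
  rcases hδle1.lt_or_eq with hδlt1 | hδeq1
  · -- main case : δ < 1
    set s₀ : ℝ := 2 * (1 - δ) with hs₀
    have hs₀pos : 0 < s₀ := by simp only [hs₀]; linarith
    have hs₀lt2 : s₀ < 2 := by simp only [hs₀]; linarith
    -- it suffices to prove the bound up to an arbitrary θ > 0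
    refine le_of_forall_pos_le_add (fun θ hθ => ?_)
    set η : ℝ := min (δ * θ / 2) ((1 - δ) / 2) with hη
    have hηpos : 0 < η := lt_min (by positivity) (by linarith)
    have hη1 : η ≤ δ * θ / 2 := min_le_left _ _
    have hη2 : η ≤ (1 - δ) / 2 := min_le_right _ _
    -- pick a near optimal pair for δ(ε)
    have hlt : modConv X ε < δ + η := by linarith
    have hne : {t : ℝ | ∃ x y : X, ‖x‖ ≤ 1 ∧ ‖y‖ ≤ 1 ∧ ε ≤ ‖x - y‖ ∧ t = 1 - ‖x + y‖ / 2}.Nonempty := by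
      obtain ⟨e, he⟩ := exists_norm_eq X (zero_le_one)
      refine ⟨1 - ‖e + -e‖ / 2, e, -e, he.le, by rw [norm_neg, he], ?_, rfl⟩
      have : e - -e = (2 : ℝ) • e := by module
      rw [this, norm_smul, he]
      norm_num
      exact hε2
    obtain ⟨t, ht, htlt⟩ := exists_lt_of_csInf_lt hne hlt
    obtain ⟨u, v, hu, hv, huv, rfl⟩ := ht
    -- so ‖u+v‖ > s₀ - 2η
    have hD : s₀ - 2 * η < ‖u + v‖ := by
      simp only [hs₀]; linarith
    set D : ℝ := ‖u + v‖ with hDdef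
    have hDpos : 0 < D := by
      have : s₀ - 2 * η ≥ s₀ - (1 - δ) := by linarith
      have : (0:ℝ) < s₀ - 2 * η := by simp only [hs₀]; linarith
      linarith
    rcases le_or_gt s₀ D with hcase | hcase
    · -- already a valid pair : x = u, y = -v
      have hb : modConv X s₀ ≤ 1 - ‖u + -v‖ / 2 := by
        apply modConv_le hu (by rw [norm_neg]; exact hv)
        have : u - -v = u + v := by abel
        rw [this]; exact hcase
      have : ε ≤ ‖u + -v‖ := by
        have : u + -v = u - v := by abel
        rw [this]; exact huv
      calc modConv X s₀ ≤ 1 - ‖u + -v‖ / 2 := hb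
        _ ≤ 1 - ε / 2 := by linarith
        _ ≤ 1 - ε / 2 + θ := by linarith
    · -- stretch the pair
      set μ : ℝ := (s₀ - D) / (2 - D) with hμ
      have h2D : 0 < 2 - D := by linarith
      have hμpos : 0 < μ := div_pos (by linarith) h2D
      have hμlt1 : μ < 1 := by
        rw [hμ, div_lt_one h2D]; linarith
      have hμsmall : μ ≤ θ / 2 := by
        rw [hμ, div_le_iff₀ h2D]
        have h1 : s₀ - D < 2 * η := by linarith
        have h2 : 2 * η ≤ δ * θ := by linarith
        have h3 : 2 * δ ≤ 2 - D := by
          have : D < s₀ := hcase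
          simp only [hs₀] at this ⊢; linarith
        nlinarith
      set e : X := D⁻¹ • (u + v) with he
      have hne : ‖e‖ = 1 := by
        rw [he, norm_smul, Real.norm_eq_abs, abs_inv, abs_of_pos hDpos, ← hDdef]
        field_simp
      set a : X := (1 - μ) • u + μ • e with ha
      set b : X := (1 - μ) • (-v) - μ • e with hb
      have hna : ‖a‖ ≤ 1 := by
        calc ‖a‖ ≤ ‖(1 - μ) • u‖ + ‖μ • e‖ := norm_add_le _ _
          _ = (1 - μ) * ‖u‖ + μ * ‖e‖ := by
              rw [norm_smul, norm_smul, Real.norm_eq_abs, Real.norm_eq_abs,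
                abs_of_pos hμpos, abs_of_nonneg (by linarith : (0:ℝ) ≤ 1 - μ)]
          _ ≤ (1 - μ) * 1 + μ * 1 := by
              apply add_le_add
              · exact mul_le_mul_of_nonneg_left hu (by linarith)
              · rw [hne]
          _ = 1 := by ring
      have hnb : ‖b‖ ≤ 1 := by
        calc ‖b‖ ≤ ‖(1 - μ) • (-v)‖ + ‖μ • e‖ := norm_sub_le _ _
          _ = (1 - μ) * ‖v‖ + μ * ‖e‖ := by
              rw [norm_smul, norm_smul, Real.norm_eq_abs, Real.norm_eq_abs, norm_neg,
                abs_of_pos hμpos, abs_of_nonneg (by linarith : (0:ℝ) ≤ 1 - μ)]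
          _ ≤ (1 - μ) * 1 + μ * 1 := by
              apply add_le_add
              · exact mul_le_mul_of_nonneg_left hv (by linarith)
              · rw [hne]
          _ = 1 := by ring
      have habsub : a - b = ((1 - μ) * D + 2 * μ) • e := by
        have huvD : u + v = D • e := by
          rw [he, smul_smul]
          rw [mul_inv_cancel₀ (ne_of_gt hDpos), one_smul]
        rw [ha, hb]
        have : (1 - μ) • u + μ • e - ((1 - μ) • (-v) - μ • e)
            = (1 - μ) • (u + v) + (2 * μ) • e := by module
        rw [this, huvD, smul_smul, ← add_smul]
      have hnormsub : ‖a - b‖ = s₀ := by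
        rw [habsub, norm_smul, Real.norm_eq_abs, hne, mul_one]
        rw [abs_of_nonneg (by nlinarith : (0:ℝ) ≤ (1 - μ) * D + 2 * μ)]
        have key : μ * (2 - D) = s₀ - D := by
          rw [hμ]; exact div_mul_cancel₀ _ (ne_of_gt h2D)
        linear_combination key
      have habadd : a + b = (1 - μ) • (u - v) := by
        rw [ha, hb]; module
      have hnormadd : (1 - μ) * ε ≤ ‖a + b‖ := by
        rw [habadd, norm_smul, Real.norm_eq_abs,
          abs_of_nonneg (by linarith : (0:ℝ) ≤ 1 - μ)]
        exact mul_le_mul_of_nonneg_left huv (by linarith)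
      have hmain : modConv X s₀ ≤ 1 - ‖a + b‖ / 2 :=
        modConv_le hna hnb (le_of_eq hnormsub.symm)
      calc modConv X s₀ ≤ 1 - ‖a + b‖ / 2 := hmain
        _ ≤ 1 - (1 - μ) * ε / 2 := by linarith
        _ = 1 - ε / 2 + μ * ε / 2 := by ring
        _ ≤ 1 - ε / 2 + θ := by
            have h1 : μ * ε ≤ μ * 2 := mul_le_mul_of_nonneg_left hε2 hμpos.le
            linarith
  · -- degenerate case δ = 1
    have h0 : (2 : ℝ) * (1 - δ) = 0 := by rw [← hδeq1]; ring
    rw [h0, modConv_zero]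
    linarith
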